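/- Let n ≥ 1, let R = (R_1, …, R_{n−1}) be a family of subsets of {1, …, n+1}, and let S be an R-admissible sequence. Let H be the number of pairs (C, D), with C = [a,e]^i a connected component of Q_S and D = [a′,b′]^j a connected component of the complement, satisfying a′ ≤ a ≤ b′ ≤ e, and let E be the number of such pairs satisfying a+1 ≤ a′ ≤ e+1 ≤ b′. Then H − E = n(n+1)/2. -/

import Mathlib

/-- `S` is an `R`-admissible sequence. -/
def RAdmissible (n : ℕ) (R S : ℕ → Finset ℕ) : Prop :=
  (∀ t, 1 ≤ t → t ≤ n - 1 → R t ⊆ Finset.Icc 1 (n + 1)) ∧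
  (∀ i, 1 ≤ i → i ≤ n → S i ⊆ Finset.Icc 1 (n + 1) ∧ (S i).card = i) ∧
  (∀ i, 1 ≤ i → i ≤ n - 1 → S i ⊆ S (i + 1) ∪ R i)

/-- The segment `[a,b]^i` is a connected component of `Q_S`. -/
def IsCompQ (n : ℕ) (R S : ℕ → Finset ℕ) (i a b : ℕ) : Prop :=
  i ∈ Finset.Icc 1 (n + 1) ∧ 1 ≤ a ∧ a ≤ b ∧ b ≤ n ∧
  (∀ t, a ≤ t → t ≤ b → i ∈ S t) ∧ (∀ t, a ≤ t → t ≤ b - 1 → i ∉ R t) ∧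
  (a = 1 ∨ i ∉ S (a - 1) ∨ i ∈ R (a - 1)) ∧
  (b = n ∨ i ∉ S (b + 1) ∨ i ∈ R b)

/-- The segment `[a,b]^j` is a connected component of the complement of `Q_S`. -/
def IsCompC (n : ℕ) (R S : ℕ → Finset ℕ) (j a b : ℕ) : Prop :=
  j ∈ Finset.Icc 1 (n + 1) ∧ 1 ≤ a ∧ a ≤ b ∧ b ≤ n ∧
  (∀ t, a ≤ t → t ≤ b → j ∉ S t) ∧ (∀ t, a ≤ t → t ≤ b - 1 → j ∉ R t) ∧
  (a = 1 ∨ j ∈ S (a - 1) ∨ j ∈ R (a - 1)) ∧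
  (b = n ∨ j ∈ S (b + 1) ∨ j ∈ R b)

open Finset


/-- Generic component predicate: `M` is "membership" at each column, `Rm` the breaking set. -/
def GComp (n : ℕ) (Rm M : ℕ → Prop) (a b : ℕ) : Prop :=
  1 ≤ a ∧ a ≤ b ∧ b ≤ n ∧
  (∀ t, a ≤ t → t ≤ b → M t) ∧ (∀ t, a ≤ t → t ≤ b - 1 → ¬ Rm t) ∧
  (a = 1 ∨ ¬ M (a - 1) ∨ Rm (a - 1)) ∧
  (b = n ∨ ¬ M (b + 1) ∨ Rm b)

theorem GComp_exists (n : ℕ) (Rm M : ℕ → Prop) (t : ℕ) (ht1 : 1 ≤ t) (htn : t ≤ n)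
    (hM : M t) : ∃ a b, GComp n Rm M a b ∧ a ≤ t ∧ t ≤ b := by
  classical
  set P : ℕ → Prop := fun s => s = 1 ∨ ¬ M (s - 1) ∨ Rm (s - 1) with hP
  set a := Nat.findGreatest P t with haDef
  have hP1 : P 1 := Or.inl rfl
  have ha1 : 1 ≤ a := Nat.le_findGreatest ht1 hP1
  have hat : a ≤ t := Nat.findGreatest_le t
  have hPa : P a := Nat.findGreatest_spec ht1 hP1
  -- no break between a+1 and t
  have hnb : ∀ u, a < u → u ≤ t → M (u - 1) ∧ ¬ Rm (u - 1) := by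
    intro u hu hut
    have h0 := Nat.findGreatest_is_greatest (P := P) hu hut
    rw [hP] at h0
    obtain ⟨hx, hy⟩ := not_or.mp h0
    obtain ⟨hy1, hy2⟩ := not_or.mp hy
    exact ⟨not_not.mp hy1, hy2⟩
  -- membership downward from t
  have hMdown : ∀ u, a ≤ u → u ≤ t → M u := by
    intro u hau hut
    rcases eq_or_lt_of_le hut with h | h
    · subst h; exact hM
    · have := hnb (u + 1) (by omega) (by omega)
      simpa using this.1
  have hRdown : ∀ u, a ≤ u → u ≤ t - 1 → ¬ Rm u := by
    intro u hau hut
    have := hnb (u + 1) (by omega) (by omega)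
    simpa using this.2
  -- forward end
  have hex : ∃ m, t ≤ m ∧ (m = n ∨ ¬ M (m + 1) ∨ Rm m) := ⟨n, htn, Or.inl rfl⟩
  set b := Nat.find hex with hbDef
  have hbspec := Nat.find_spec hex
  have htb : t ≤ b := hbspec.1
  have hbn : b ≤ n := by
    by_contra h
    have := Nat.find_min hex (m := n) (by omega)
    push_neg at this
    exact absurd rfl (this htn).1
  have hnb2 : ∀ u, t ≤ u → u < b → M (u + 1) ∧ ¬ Rm u ∧ u ≠ n := by
    intro u htu hub
    have := Nat.find_min hex (m := u) hub
    push_neg at this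
    have h2 := this htu
    exact ⟨h2.2.1, h2.2.2, h2.1⟩
  have hMup : ∀ u, t ≤ u → u ≤ b → M u := by
    intro u htu hub
    rcases eq_or_lt_of_le htu with h | h
    · subst h; exact hM
    · have := hnb2 (u - 1) (by omega) (by omega)
      have h1 := this.1
      have : u - 1 + 1 = u := by omega
      rwa [this] at h1
  have hRup : ∀ u, t ≤ u → u ≤ b - 1 → ¬ Rm u := by
    intro u htu hub
    exact (hnb2 u htu (by omega)).2.1
  refine ⟨a, b, ⟨ha1, le_trans hat htb, hbn, ?_, ?_, ?_, ?_⟩, hat, htb⟩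
  · intro u hau hub
    rcases le_or_gt u t with h | h
    · exact hMdown u hau h
    · exact hMup u h.le hub
  · intro u hau hub
    rcases le_or_gt u (t-1) with h | h
    · exact hRdown u hau h
    · exact hRup u (by omega) hub
  · exact hPa
  · exact hbspec.2

theorem GComp_start_le (n : ℕ) (Rm M : ℕ → Prop) {a b t s : ℕ}
    (hc : GComp n Rm M a b) (hta : a ≤ t) (htb : t ≤ b) (hs1 : 1 ≤ s) (hst : s ≤ t)
    (hMch : ∀ u, s ≤ u → u ≤ t → M u) (hRch : ∀ u, s ≤ u → u ≤ t - 1 → ¬ Rm u) :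
    a ≤ s := by
  by_contra h
  push_neg at h
  obtain ⟨ha1, hab, hbn, hM, hR, hleft, hright⟩ := hc
  have ha2 : 2 ≤ a := by omega
  rcases hleft with h1 | h1 | h1
  · omega
  · exact h1 (hMch (a - 1) (by omega) (by omega))
  · exact hRch (a - 1) (by omega) (by omega) h1

theorem GComp_end_ge (n : ℕ) (Rm M : ℕ → Prop) {a b t m : ℕ}
    (hc : GComp n Rm M a b) (hta : a ≤ t) (htb : t ≤ b) (htm : t ≤ m) (hmn : m ≤ n)
    (hMch : ∀ u, t ≤ u → u ≤ m → M u) (hRch : ∀ u, t ≤ u → u ≤ m - 1 → ¬ Rm u) :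
    m ≤ b := by
  by_contra h
  push_neg at h
  obtain ⟨ha1, hab, hbn, hM, hR, hleft, hright⟩ := hc
  rcases hright with h1 | h1 | h1
  · omega
  · exact h1 (hMch (b + 1) (by omega) (by omega))
  · exact hRch b (by omega) (by omega) h1

theorem GComp_unique (n : ℕ) (Rm M : ℕ → Prop) {a b a' b' t : ℕ}
    (hc : GComp n Rm M a b) (hc' : GComp n Rm M a' b')
    (h1 : a ≤ t) (h2 : t ≤ b) (h3 : a' ≤ t) (h4 : t ≤ b') : a = a' ∧ b = b' := by
  obtain ⟨ha1, hab, hbn, hM, hR, hleft, hright⟩ := hc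
  obtain ⟨ha1', hab', hbn', hM', hR', hleft', hright'⟩ := hc'
  have haa' : a ≤ a' := GComp_start_le n Rm M ⟨ha1, hab, hbn, hM, hR, hleft, hright⟩
    h1 h2 ha1' h3 (fun u hu hu2 => hM' u hu (le_trans hu2 h4))
    (fun u hu hu2 => hR' u hu (by omega))
  have ha'a : a' ≤ a := GComp_start_le n Rm M ⟨ha1', hab', hbn', hM', hR', hleft', hright'⟩
    h3 h4 ha1 h1 (fun u hu hu2 => hM u hu (le_trans hu2 h2))
    (fun u hu hu2 => hR u hu (by omega))
  have hbb' : b' ≤ b := GComp_end_ge n Rm M ⟨ha1, hab, hbn, hM, hR, hleft, hright⟩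
    h1 h2 h4 hbn' (fun u hu hu2 => hM' u (le_trans h3 hu) hu2)
    (fun u hu hu2 => hR' u (le_trans h3 hu) (by omega))
  have hb'b : b ≤ b' := GComp_end_ge n Rm M ⟨ha1', hab', hbn', hM', hR', hleft', hright'⟩
    h3 h4 h2 hbn (fun u hu hu2 => hM u (le_trans h1 hu) hu2)
    (fun u hu hu2 => hR u (le_trans h1 hu) (by omega))
  omega



theorem isCompQ_iff (n : ℕ) (R S : ℕ → Finset ℕ) (i a b : ℕ) :
    IsCompQ n R S i a b ↔
      i ∈ Finset.Icc 1 (n + 1) ∧ GComp n (fun t => i ∈ R t) (fun t => i ∈ S t) a b := by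
  unfold IsCompQ GComp
  tauto

theorem isCompC_iff (n : ℕ) (R S : ℕ → Finset ℕ) (j a b : ℕ) :
    IsCompC n R S j a b ↔
      j ∈ Finset.Icc 1 (n + 1) ∧ GComp n (fun t => j ∈ R t) (fun t => j ∉ S t) a b := by
  unfold IsCompC GComp
  constructor
  · rintro ⟨h0, h1, h2, h3, h4, h5, h6, h7⟩
    refine ⟨h0, h1, h2, h3, h4, h5, ?_, ?_⟩ <;> tauto
  · rintro ⟨h0, h1, h2, h3, h4, h5, h6, h7⟩
    refine ⟨h0, h1, h2, h3, h4, h5, ?_, ?_⟩ <;> tauto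

/-- Propagation: membership in `S` persists forward along an `R`-free stretch. -/
theorem prop_S {n : ℕ} {R S : ℕ → Finset ℕ} (hadm : RAdmissible n R S)
    {i s m : ℕ} (hs : 1 ≤ s) (hm : m ≤ n) (hS : i ∈ S s)
    (hR : ∀ u, s ≤ u → u ≤ m - 1 → i ∉ R u) :
    ∀ u, s ≤ u → u ≤ m → i ∈ S u := by
  intro u hsu hum
  induction u with
  | zero => omega
  | succ v ih =>
    rcases Nat.lt_or_ge s (v+1) with h | h
    · have hv : i ∈ S v := ih (by omega) (by omega)
      have hval : 1 ≤ v := by omega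
      have hsub := hadm.2.2 v hval (by omega)
      have := hsub hv
      rcases Finset.mem_union.mp this with h1 | h1
      · exact h1
      · exact absurd h1 (hR v (by omega) (by omega))
    · have : s = v + 1 := by omega
      rwa [← this]

open Classical in
/-- Finset of connected components of the complement. -/
noncomputable def compCF (n : ℕ) (R S : ℕ → Finset ℕ) : Finset (ℕ × ℕ × ℕ) :=
  ((Finset.Icc 1 (n+1)) ×ˢ (Finset.Icc 1 n) ×ˢ (Finset.Icc 1 n)).filter
    (fun p => IsCompC n R S p.1 p.2.1 p.2.2)

open Classical in
noncomputable def hFib (n : ℕ) (R S : ℕ → Finset ℕ) (a' b' : ℕ) : Finset ℕ :=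
  (Finset.Icc 1 (n+1)).filter
    (fun i => ∃ a e, IsCompQ n R S i a e ∧ a' ≤ a ∧ a ≤ b' ∧ b' ≤ e)

open Classical in
noncomputable def eFib (n : ℕ) (R S : ℕ → Finset ℕ) (a' b' : ℕ) : Finset ℕ :=
  (Finset.Icc 1 (n+1)).filter
    (fun i => ∃ a e, IsCompQ n R S i a e ∧ a + 1 ≤ a' ∧ a' ≤ e + 1 ∧ e + 1 ≤ b')

open Classical in
noncomputable def Span (n : ℕ) (R S : ℕ → Finset ℕ) (a' b' : ℕ) : Finset ℕ :=
  (S (a'-1)).filter (fun i => ∀ u, a' - 1 ≤ u → u ≤ b' - 1 → i ∉ R u)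

theorem mem_compCF {n : ℕ} {R S : ℕ → Finset ℕ} {p : ℕ × ℕ × ℕ} :
    p ∈ compCF n R S ↔ IsCompC n R S p.1 p.2.1 p.2.2 := by
  classical
  simp only [compCF, Finset.mem_filter, Finset.mem_product, and_iff_right_iff_imp]
  intro h
  obtain ⟨h0, h1, h2, h3, _⟩ := h
  refine ⟨h0, ?_, ?_⟩ <;> simp [Finset.mem_Icc] <;> omega

theorem hFib_eq_one {n : ℕ} {R S : ℕ → Finset ℕ} (hadm : RAdmissible n R S)
    {b' : ℕ} (hb1 : 1 ≤ b') (hbn : b' ≤ n) :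
    hFib n R S 1 b' = S b' := by
  classical
  ext i
  simp only [hFib, Finset.mem_filter]
  constructor
  · rintro ⟨hIcc, a, e, hc, h1, h2, h3⟩
    exact hc.2.2.2.2.1 b' h2 h3
  · intro hi
    have hIcc : i ∈ Finset.Icc 1 (n+1) := (hadm.2.1 b' hb1 hbn).1 hi
    obtain ⟨a, e, hg, hab, hbe⟩ :=
      GComp_exists n (fun t => i ∈ R t) (fun t => i ∈ S t) b' hb1 hbn hi
    exact ⟨hIcc, a, e, (isCompQ_iff n R S i a e).mpr ⟨hIcc, hg⟩, hg.1, hab, hbe⟩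

theorem eFib_eq_one {n : ℕ} {R S : ℕ → Finset ℕ} {b' : ℕ} :
    eFib n R S 1 b' = ∅ := by
  classical
  ext i
  simp only [eFib, Finset.mem_filter, Finset.notMem_empty, iff_false]
  rintro ⟨hIcc, a, e, hc, h1, h2, h3⟩
  have := hc.2.1
  omega

theorem hFib_eq {n : ℕ} {R S : ℕ → Finset ℕ} (hadm : RAdmissible n R S)
    {a' b' : ℕ} (ha' : 2 ≤ a') (hab : a' ≤ b') (hbn : b' ≤ n) :
    hFib n R S a' b' = S b' \ Span n R S a' b' := by
  classical
  ext i
  simp only [hFib, Span, Finset.mem_filter, Finset.mem_sdiff]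
  constructor
  · rintro ⟨hIcc, a, e, hc, h1, h2, h3⟩
    have hg := ((isCompQ_iff n R S i a e).mp hc).2
    refine ⟨hg.2.2.2.1 b' h2 h3, ?_⟩
    rintro ⟨hS1, hRfree⟩
    have hch : ∀ u, a' - 1 ≤ u → u ≤ b' → i ∈ S u :=
      prop_S hadm (by omega) hbn hS1 hRfree
    have := GComp_start_le n (fun t => i ∈ R t) (fun t => i ∈ S t) hg h2 h3
      (by omega) (by omega) hch (fun u hu hu2 => hRfree u hu (by omega))
    omega
  · rintro ⟨hSb, hnsp⟩
    have hIcc : i ∈ Finset.Icc 1 (n+1) := (hadm.2.1 b' (by omega) hbn).1 hSb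
    obtain ⟨a, e, hg, hab', hbe⟩ :=
      GComp_exists n (fun t => i ∈ R t) (fun t => i ∈ S t) b' (by omega) hbn hSb
    refine ⟨hIcc, a, e, (isCompQ_iff n R S i a e).mpr ⟨hIcc, hg⟩, ?_, hab', hbe⟩
    by_contra hcon
    push_neg at hcon
    have ha1 : a ≤ a' - 1 := by omega
    exact hnsp ⟨hg.2.2.2.1 (a'-1) ha1 (by omega),
      fun u hu hu2 => hg.2.2.2.2.1 u (by omega) (by omega)⟩

theorem eFib_eq {n : ℕ} {R S : ℕ → Finset ℕ} (hadm : RAdmissible n R S)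
    {a' b' : ℕ} (ha' : 2 ≤ a') (hab : a' ≤ b') (hbn : b' ≤ n) :
    eFib n R S a' b' = S (a' - 1) \ Span n R S a' b' := by
  classical
  ext i
  simp only [eFib, Span, Finset.mem_filter, Finset.mem_sdiff]
  constructor
  · rintro ⟨hIcc, a, e, hc, h1, h2, h3⟩
    have hg := ((isCompQ_iff n R S i a e).mp hc).2
    refine ⟨hg.2.2.2.1 (a'-1) (by omega) (by omega), ?_⟩
    rintro ⟨hS1, hRfree⟩
    have hch : ∀ u, a' - 1 ≤ u → u ≤ b' → i ∈ S u :=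
      prop_S hadm (by omega) hbn hS1 hRfree
    have := GComp_end_ge n (fun t => i ∈ R t) (fun t => i ∈ S t) hg
      (by omega : a ≤ a' - 1) (by omega) (by omega : a' - 1 ≤ b') hbn
      (fun u hu hu2 => hch u hu hu2) (fun u hu hu2 => hRfree u hu hu2)
    omega
  · rintro ⟨hSa, hnsp⟩
    have hIcc : i ∈ Finset.Icc 1 (n+1) := (hadm.2.1 (a'-1) (by omega) (by omega)).1 hSa
    obtain ⟨a, e, hg, hab', hbe⟩ :=
      GComp_exists n (fun t => i ∈ R t) (fun t => i ∈ S t) (a'-1) (by omega) (by omega) hSa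
    push_neg at hnsp
    obtain ⟨u, hu1, hu2, hu3⟩ := hnsp hSa
    have heb : e ≤ b' - 1 := by
      by_contra hcon
      push_neg at hcon
      exact absurd hu3 (hg.2.2.2.2.1 u (by omega) (by omega)).elim
    exact ⟨hIcc, a, e, (isCompQ_iff n R S i a e).mpr ⟨hIcc, hg⟩, by omega, by omega, by omega⟩

theorem span_subset_right {n : ℕ} {R S : ℕ → Finset ℕ} (hadm : RAdmissible n R S)
    {a' b' : ℕ} (ha' : 2 ≤ a') (hab : a' ≤ b') (hbn : b' ≤ n) :
    Span n R S a' b' ⊆ S b' := by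
  classical
  intro i hi
  simp only [Span, Finset.mem_filter] at hi
  exact prop_S hadm (by omega) hbn hi.1 hi.2 b' (by omega) le_rfl

theorem fib_diff {n : ℕ} {R S : ℕ → Finset ℕ} (hadm : RAdmissible n R S)
    {j a' b' : ℕ} (hD : IsCompC n R S j a' b') :
    ((hFib n R S a' b').card : ℤ) - ((eFib n R S a' b').card : ℤ) = (b' : ℤ) - a' + 1 := by
  classical
  obtain ⟨hIcc, ha1, hab, hbn, -⟩ := hD
  have hSb : (S b').card = b' := (hadm.2.1 b' (by omega) hbn).2
  rcases eq_or_lt_of_le ha1 with h1 | h1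
  · rw [← h1, hFib_eq_one hadm (by omega) (by omega), eFib_eq_one (b' := b')]
    simp only [Finset.card_empty, Nat.cast_zero, sub_zero, hSb]
    omega
  · have ha2 : 2 ≤ a' := h1
    have hSa : (S (a'-1)).card = a' - 1 := (hadm.2.1 (a'-1) (by omega) (by omega)).2
    rw [hFib_eq hadm ha2 hab hbn, eFib_eq hadm ha2 hab hbn]
    have hsub1 : Span n R S a' b' ⊆ S b' := span_subset_right hadm ha2 hab hbn
    have hsub2 : Span n R S a' b' ⊆ S (a'-1) := Finset.filter_subset _ _
    have e1 := Finset.card_sdiff_add_card_eq_card hsub1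
    have e2 := Finset.card_sdiff_add_card_eq_card hsub2
    omega

open Classical in
noncomputable def PhF (n : ℕ) (R S : ℕ → Finset ℕ) : Finset ((ℕ×ℕ×ℕ)×(ℕ×ℕ×ℕ)) :=
  (((Finset.Icc 1 (n+1)) ×ˢ (Finset.Icc 1 n) ×ˢ (Finset.Icc 1 n)) ×ˢ
    ((Finset.Icc 1 (n+1)) ×ˢ (Finset.Icc 1 n) ×ˢ (Finset.Icc 1 n))).filter
    (fun q => IsCompQ n R S q.1.1 q.1.2.1 q.1.2.2 ∧ IsCompC n R S q.2.1 q.2.2.1 q.2.2.2 ∧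
        q.2.2.1 ≤ q.1.2.1 ∧ q.1.2.1 ≤ q.2.2.2 ∧ q.2.2.2 ≤ q.1.2.2)

open Classical in
noncomputable def PeF (n : ℕ) (R S : ℕ → Finset ℕ) : Finset ((ℕ×ℕ×ℕ)×(ℕ×ℕ×ℕ)) :=
  (((Finset.Icc 1 (n+1)) ×ˢ (Finset.Icc 1 n) ×ˢ (Finset.Icc 1 n)) ×ˢ
    ((Finset.Icc 1 (n+1)) ×ˢ (Finset.Icc 1 n) ×ˢ (Finset.Icc 1 n))).filter
    (fun q => IsCompQ n R S q.1.1 q.1.2.1 q.1.2.2 ∧ IsCompC n R S q.2.1 q.2.2.1 q.2.2.2 ∧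
        q.1.2.1 + 1 ≤ q.2.2.1 ∧ q.2.2.1 ≤ q.1.2.2 + 1 ∧ q.1.2.2 + 1 ≤ q.2.2.2)

theorem setH_eq (n : ℕ) (R S : ℕ → Finset ℕ) :
    {q : (ℕ × ℕ × ℕ) × (ℕ × ℕ × ℕ) |
        IsCompQ n R S q.1.1 q.1.2.1 q.1.2.2 ∧ IsCompC n R S q.2.1 q.2.2.1 q.2.2.2 ∧
        q.2.2.1 ≤ q.1.2.1 ∧ q.1.2.1 ≤ q.2.2.2 ∧ q.2.2.2 ≤ q.1.2.2} = ↑(PhF n R S) := by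
  classical
  ext q
  simp only [Set.mem_setOf_eq, PhF, Finset.coe_filter, Finset.mem_product, Finset.mem_Icc]
  constructor
  · rintro ⟨hQ, hC, h1, h2, h3⟩
    obtain ⟨q0, qa1, qab, qbn, -⟩ := id hQ
    obtain ⟨c0, ca1, cab, cbn, -⟩ := id hC
    simp only [Finset.mem_Icc] at q0 c0
    exact ⟨⟨⟨q0, by omega, by omega⟩, c0, by omega, by omega⟩, hQ, hC, h1, h2, h3⟩
  · rintro ⟨-, h⟩
    exact h

theorem setE_eq (n : ℕ) (R S : ℕ → Finset ℕ) :
    {q : (ℕ × ℕ × ℕ) × (ℕ × ℕ × ℕ) |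
        IsCompQ n R S q.1.1 q.1.2.1 q.1.2.2 ∧ IsCompC n R S q.2.1 q.2.2.1 q.2.2.2 ∧
        q.1.2.1 + 1 ≤ q.2.2.1 ∧ q.2.2.1 ≤ q.1.2.2 + 1 ∧ q.1.2.2 + 1 ≤ q.2.2.2} = ↑(PeF n R S) := by
  classical
  ext q
  simp only [Set.mem_setOf_eq, PeF, Finset.coe_filter, Finset.mem_product, Finset.mem_Icc]
  constructor
  · rintro ⟨hQ, hC, h1, h2, h3⟩
    obtain ⟨q0, qa1, qab, qbn, -⟩ := id hQ
    obtain ⟨c0, ca1, cab, cbn, -⟩ := id hC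
    simp only [Finset.mem_Icc] at q0 c0
    exact ⟨⟨⟨q0, by omega, by omega⟩, c0, by omega, by omega⟩, hQ, hC, h1, h2, h3⟩
  · rintro ⟨-, h⟩
    exact h

theorem PhF_card (n : ℕ) (R S : ℕ → Finset ℕ) :
    (PhF n R S).card = ∑ D ∈ compCF n R S, (hFib n R S D.2.1 D.2.2).card := by
  classical
  rw [Finset.card_eq_sum_card_fiberwise (f := fun q => q.2) (t := compCF n R S)
    (by intro q hq
        simp only [Finset.mem_coe, PhF, Finset.mem_filter] at hq
        exact mem_compCF.mpr hq.2.2.1)]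
  refine Finset.sum_congr rfl (fun D hD => ?_)
  apply Finset.card_bij (fun q _ => q.1.1)
  · intro q hq
    simp only [Finset.mem_filter, PhF] at hq
    obtain ⟨⟨hmem, hQ, hC, h1, h2, h3⟩, hqD⟩ := hq
    simp only [hFib, Finset.mem_filter]
    rw [hqD] at h1 h2 h3
    exact ⟨hQ.1, q.1.2.1, q.1.2.2, hQ, h1, h2, h3⟩
  · intro q₁ hq₁ q₂ hq₂ hii
    simp only [Finset.mem_filter, PhF] at hq₁ hq₂
    obtain ⟨⟨hmem₁, hQ₁, hC₁, h11, h12, h13⟩, hqD₁⟩ := hq₁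
    obtain ⟨⟨hmem₂, hQ₂, hC₂, h21, h22, h23⟩, hqD₂⟩ := hq₂
    rw [hqD₁] at h11 h12 h13
    rw [hqD₂] at h21 h22 h23
    have hg₁ := ((isCompQ_iff n R S _ _ _).mp hQ₁).2
    have hg₂ := ((isCompQ_iff n R S _ _ _).mp hQ₂).2
    rw [hii] at hg₁
    have := GComp_unique n (fun t => q₂.1.1 ∈ R t) (fun t => q₂.1.1 ∈ S t)
      hg₁ hg₂ (t := D.2.2) h12 h13 h22 h23
    exact Prod.ext (Prod.ext hii (Prod.ext this.1 this.2)) (hqD₁.trans hqD₂.symm)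
  · intro i hi
    simp only [hFib, Finset.mem_filter] at hi
    obtain ⟨hIcc, a, e, hQ, h1, h2, h3⟩ := hi
    have hD' := mem_compCF.mp hD
    refine ⟨((i, a, e), D), ?_, rfl⟩
    simp only [Finset.mem_filter, PhF, Finset.mem_product, Finset.mem_Icc]
    obtain ⟨-, qa1, qab, qbn, -⟩ := id hQ
    have hDmem : D ∈ ((Finset.Icc 1 (n+1)) ×ˢ (Finset.Icc 1 n) ×ˢ (Finset.Icc 1 n)) := by
      simp only [compCF, Finset.mem_filter] at hD
      exact hD.1
    simp only [Finset.mem_product, Finset.mem_Icc] at hDmem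
    simp only [Finset.mem_Icc] at hIcc
    exact ⟨⟨⟨⟨hIcc, ⟨by omega, by omega⟩, by omega, by omega⟩,
      ⟨hDmem.1, hDmem.2⟩⟩, hQ, hD', h1, h2, h3⟩, trivial⟩

theorem PeF_card (n : ℕ) (R S : ℕ → Finset ℕ) :
    (PeF n R S).card = ∑ D ∈ compCF n R S, (eFib n R S D.2.1 D.2.2).card := by
  classical
  rw [Finset.card_eq_sum_card_fiberwise (f := fun q => q.2) (t := compCF n R S)
    (by intro q hq
        simp only [Finset.mem_coe, PeF, Finset.mem_filter] at hq
        exact mem_compCF.mpr hq.2.2.1)]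
  refine Finset.sum_congr rfl (fun D hD => ?_)
  apply Finset.card_bij (fun q _ => q.1.1)
  · intro q hq
    simp only [Finset.mem_filter, PeF] at hq
    obtain ⟨⟨hmem, hQ, hC, h1, h2, h3⟩, hqD⟩ := hq
    simp only [eFib, Finset.mem_filter]
    rw [hqD] at h1 h2 h3
    exact ⟨hQ.1, q.1.2.1, q.1.2.2, hQ, h1, h2, h3⟩
  · intro q₁ hq₁ q₂ hq₂ hii
    simp only [Finset.mem_filter, PeF] at hq₁ hq₂
    obtain ⟨⟨hmem₁, hQ₁, hC₁, h11, h12, h13⟩, hqD₁⟩ := hq₁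
    obtain ⟨⟨hmem₂, hQ₂, hC₂, h21, h22, h23⟩, hqD₂⟩ := hq₂
    rw [hqD₁] at h11 h12 h13
    rw [hqD₂] at h21 h22 h23
    have hg₁ := ((isCompQ_iff n R S _ _ _).mp hQ₁).2
    have hg₂ := ((isCompQ_iff n R S _ _ _).mp hQ₂).2
    rw [hii] at hg₁
    have hau₁ := hg₁.1
    have hau₂ := hg₂.1
    have := GComp_unique n (fun t => q₂.1.1 ∈ R t) (fun t => q₂.1.1 ∈ S t)
      hg₁ hg₂ (t := D.2.1 - 1) (by omega) (by omega) (by omega) (by omega)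
    exact Prod.ext (Prod.ext hii (Prod.ext this.1 this.2)) (hqD₁.trans hqD₂.symm)
  · intro i hi
    simp only [eFib, Finset.mem_filter] at hi
    obtain ⟨hIcc, a, e, hQ, h1, h2, h3⟩ := hi
    have hD' := mem_compCF.mp hD
    refine ⟨((i, a, e), D), ?_, rfl⟩
    simp only [Finset.mem_filter, PeF, Finset.mem_product, Finset.mem_Icc]
    obtain ⟨-, qa1, qab, qbn, -⟩ := id hQ
    have hDmem : D ∈ ((Finset.Icc 1 (n+1)) ×ˢ (Finset.Icc 1 n) ×ˢ (Finset.Icc 1 n)) := by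
      simp only [compCF, Finset.mem_filter] at hD
      exact hD.1
    simp only [Finset.mem_product, Finset.mem_Icc] at hDmem
    simp only [Finset.mem_Icc] at hIcc
    exact ⟨⟨⟨⟨hIcc, ⟨by omega, by omega⟩, by omega, by omega⟩,
      ⟨hDmem.1, hDmem.2⟩⟩, hQ, hD', h1, h2, h3⟩, trivial⟩

theorem gauss_twice (n : ℕ) : 2 * (∑ t ∈ Finset.Icc 1 n, t) = n * (n + 1) := by
  induction n with
  | zero => simp
  | succ m ih =>
    rw [Finset.sum_Icc_succ_top (by omega)]
    ring_nf
    ring_nf at ih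
    omega

open Classical in
theorem sum_len (n : ℕ) (R S : ℕ → Finset ℕ) (hadm : RAdmissible n R S) :
    ∑ D ∈ compCF n R S, ((D.2.2 : ℤ) - (D.2.1 : ℤ) + 1) = ((n * (n + 1) / 2 : ℕ) : ℤ) := by
  classical
  have step1 : ∑ D ∈ compCF n R S, ((D.2.2 : ℤ) - (D.2.1 : ℤ) + 1)
      = ((∑ D ∈ compCF n R S, (Finset.Icc D.2.1 D.2.2).card : ℕ) : ℤ) := by
    rw [Nat.cast_sum]
    refine Finset.sum_congr rfl (fun D hD => ?_)
    have h := mem_compCF.mp hD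
    have hab : D.2.1 ≤ D.2.2 := h.2.2.1
    have h1 : 1 ≤ D.2.1 := h.2.1
    rw [Nat.card_Icc]
    push_cast
    omega
  rw [step1]
  congr 1
  -- total length of complement components = ∑_t #(complement of S t)
  have step2 : ∑ D ∈ compCF n R S, (Finset.Icc D.2.1 D.2.2).card
      = ((compCF n R S).sigma (fun D => Finset.Icc D.2.1 D.2.2)).card := by
    rw [Finset.card_sigma]
  rw [step2]
  set T : Finset (ℕ × ℕ) :=
    ((Finset.Icc 1 n) ×ˢ (Finset.Icc 1 (n+1))).filter (fun p => p.2 ∉ S p.1) with hT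
  have step3 : ((compCF n R S).sigma (fun D => Finset.Icc D.2.1 D.2.2)).card = T.card := by
    apply Finset.card_bij (fun x _ => (x.2, x.1.1))
    · rintro ⟨D, t⟩ hx
      simp only [Finset.mem_sigma] at hx
      have hC := mem_compCF.mp hx.1
      have ht := Finset.mem_Icc.mp hx.2
      simp only [hT, Finset.mem_filter, Finset.mem_product, Finset.mem_Icc]
      obtain ⟨hj, ha1, hab, hbn, hM, -⟩ := hC
      simp only [Finset.mem_Icc] at hj
      exact ⟨⟨⟨by omega, by omega⟩, hj⟩, hM t ht.1 ht.2⟩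
    · rintro ⟨D₁, t₁⟩ h₁ ⟨D₂, t₂⟩ h₂ heq
      simp only [Prod.mk.injEq] at heq
      obtain ⟨ht, hj⟩ := heq
      simp only [Finset.mem_sigma] at h₁ h₂
      have hC₁ := mem_compCF.mp h₁.1
      have hC₂ := mem_compCF.mp h₂.1
      have hg₁ := ((isCompC_iff n R S _ _ _).mp hC₁).2
      have hg₂ := ((isCompC_iff n R S _ _ _).mp hC₂).2
      rw [hj] at hg₁
      have ht₁ := Finset.mem_Icc.mp h₁.2
      have ht₂ := Finset.mem_Icc.mp h₂.2
      have := GComp_unique n (fun u => D₂.1 ∈ R u) (fun u => D₂.1 ∉ S u)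
        hg₁ hg₂ (t := t₂) (by omega) (by omega) ht₂.1 ht₂.2
      have hD : D₁ = D₂ := Prod.ext hj (Prod.ext this.1 this.2)
      subst hD
      subst ht
      rfl
    · rintro ⟨t, j⟩ hp
      simp only [hT, Finset.mem_filter, Finset.mem_product, Finset.mem_Icc] at hp
      obtain ⟨⟨⟨ht1, htn⟩, hj⟩, hns⟩ := hp
      obtain ⟨a, b, hg, hat, htb⟩ :=
        GComp_exists n (fun u => j ∈ R u) (fun u => j ∉ S u) t ht1 htn hns
      refine ⟨⟨(j, a, b), t⟩, ?_, rfl⟩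
      simp only [Finset.mem_sigma, Finset.mem_Icc]
      refine ⟨mem_compCF.mpr ?_, hat, htb⟩
      exact (isCompC_iff n R S j a b).mpr ⟨Finset.mem_Icc.mpr hj, hg⟩
  rw [step3]
  have step4 : T.card = ∑ t ∈ Finset.Icc 1 n, (n + 1 - t) := by
    rw [Finset.card_eq_sum_card_fiberwise (f := fun p => p.1) (t := Finset.Icc 1 n)
      (by rintro ⟨t, j⟩ hp
          simp only [Finset.mem_coe, hT, Finset.mem_filter, Finset.mem_product] at hp
          exact hp.1.1)]
    refine Finset.sum_congr rfl (fun t ht => ?_)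
    have htIcc := Finset.mem_Icc.mp ht
    have hcard : (Finset.Icc 1 (n+1) \ S t).card = n + 1 - t := by
      rw [Finset.card_sdiff_of_subset ((hadm.2.1 t htIcc.1 htIcc.2).1)]
      rw [(hadm.2.1 t htIcc.1 htIcc.2).2, Nat.card_Icc]
      omega
    rw [← hcard]
    apply Finset.card_bij (fun p _ => p.2)
    · rintro ⟨t', j⟩ hp
      simp only [Finset.mem_filter, hT, Finset.mem_product] at hp
      obtain ⟨⟨⟨-, hj⟩, hns⟩, hteq⟩ := hp
      have hteq' : t' = t := hteq
      subst hteq'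
      exact Finset.mem_sdiff.mpr ⟨hj, hns⟩
    · rintro ⟨t₁, j₁⟩ h₁ ⟨t₂, j₂⟩ h₂ heq
      simp only [Finset.mem_filter] at h₁ h₂
      have heq' : j₁ = j₂ := heq
      have ht12 : t₁ = t₂ := by
        have e1 : t₁ = t := h₁.2
        have e2 : t₂ = t := h₂.2
        rw [e1, e2]
      simp [ht12, heq']
    · intro j hj
      have := Finset.mem_sdiff.mp hj
      refine ⟨(t, j), ?_, rfl⟩
      simp only [Finset.mem_filter, hT, Finset.mem_product, and_true]
      exact ⟨⟨ht, this.1⟩, this.2⟩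
  rw [step4]
  have refl1 : ∑ t ∈ Finset.Icc 1 n, (n + 1 - t) = ∑ t ∈ Finset.Icc 1 n, t := by
    apply Finset.sum_nbij' (fun t => n + 1 - t) (fun t => n + 1 - t)
    · intro a ha; simp only [Finset.mem_Icc] at *; omega
    · intro a ha; simp only [Finset.mem_Icc] at *; omega
    · intro a ha; simp only [Finset.mem_Icc] at *; omega
    · intro a ha; simp only [Finset.mem_Icc] at *; omega
    · intro a ha; rfl
  rw [refl1]
  have := gauss_twice n
  omega

/-- With `H` the number of pairs `(C, D)` (`C = [a,e]^i` a component of `Q_S`,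
`D = [a',b']^j` a component of the complement) with `a' ≤ a ≤ b' ≤ e`, and `E` the number of
such pairs with `a+1 ≤ a' ≤ e+1 ≤ b'`, we have `H − E = n(n+1)/2`. -/
theorem hom_sub_ext_eq (n : ℕ) (hn : 1 ≤ n) (R S : ℕ → Finset ℕ)
    (hadm : RAdmissible n R S) :
    ({q : (ℕ × ℕ × ℕ) × (ℕ × ℕ × ℕ) |
        IsCompQ n R S q.1.1 q.1.2.1 q.1.2.2 ∧ IsCompC n R S q.2.1 q.2.2.1 q.2.2.2 ∧
        q.2.2.1 ≤ q.1.2.1 ∧ q.1.2.1 ≤ q.2.2.2 ∧ q.2.2.2 ≤ q.1.2.2}.ncard : ℤ) -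
      ({q : (ℕ × ℕ × ℕ) × (ℕ × ℕ × ℕ) |
        IsCompQ n R S q.1.1 q.1.2.1 q.1.2.2 ∧ IsCompC n R S q.2.1 q.2.2.1 q.2.2.2 ∧
        q.1.2.1 + 1 ≤ q.2.2.1 ∧ q.2.2.1 ≤ q.1.2.2 + 1 ∧ q.1.2.2 + 1 ≤ q.2.2.2}.ncard : ℤ) =
      (n * (n + 1) / 2 : ℕ) := by
  classical
  rw [setH_eq n R S, setE_eq n R S, Set.ncard_coe_finset, Set.ncard_coe_finset,
    PhF_card, PeF_card]
  rw [Nat.cast_sum, Nat.cast_sum, ← Finset.sum_sub_distrib]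
  rw [← sum_len n R S hadm]
  refine Finset.sum_congr rfl (fun D hD => ?_)
  exact fib_diff hadm (mem_compCF.mp hD)
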